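/- Let f = a_0 + a_1 z + ... + a_m z^m ∈ ℤ[z] be primitive with |a_m| α^m > |a_0| + |a_1|α + ... + |a_{m-1}|α^{m-1} for some α > 0. If there exist natural numbers n and d with n ≥ α + d such that |f(n)|/d is prime, then f is irreducible in ℤ[z]. -/

import Mathlib

open Polynomial

private lemma aux_multiset_prod_gt {c : ℝ} (hc : 1 ≤ c) :
    ∀ (s : Multiset ℝ), s ≠ 0 → (∀ x ∈ s, c < x) → c < s.prod := by
  intro s
  induction s using Multiset.induction with
  | empty => intro h; exact absurd rfl h
  | cons a s ih =>
    intro _ hx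
    rw [Multiset.prod_cons]
    rcases eq_or_ne s 0 with rfl | hs
    · simpa using hx a (by simp)
    · have hprod := ih hs (fun x hx' => hx x (Multiset.mem_cons_of_mem hx'))
      have ha : c < a := hx a (Multiset.mem_cons_self a s)
      have h1 : (1:ℝ) < a := lt_of_le_of_lt hc ha
      nlinarith

private lemma aux_root_bound (m : ℕ) (f : ℤ[X]) (hdeg : f.natDegree = m)
    (α : ℝ) (hα : 0 < α)
    (hineq : (|f.coeff m| : ℝ) * α ^ m >
      ∑ i ∈ Finset.range m, (|f.coeff i| : ℝ) * α ^ i)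
    (z : ℂ) (hz : α ≤ ‖z‖) :
    (f.map (Int.castRingHom ℂ)).eval z ≠ 0 := by
  intro h0
  have hzpos : 0 < ‖z‖ := lt_of_lt_of_le hα hz
  have hq : (1:ℝ) ≤ ‖z‖ / α := (one_le_div hα).mpr hz
  rw [Polynomial.eval_map, Polynomial.eval₂_eq_sum_range, hdeg,
    Finset.sum_range_succ] at h0
  have hmain : ‖((f.coeff m : ℂ)) * z ^ m‖ ≤
      ∑ i ∈ Finset.range m, ‖((f.coeff i : ℂ)) * z ^ i‖ := by
    have : ((f.coeff m : ℂ)) * z ^ m = -∑ i ∈ Finset.range m, ((f.coeff i : ℂ)) * z ^ i := by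
      simp only [eq_intCast] at h0
      linear_combination h0
    rw [this, norm_neg]
    exact norm_sum_le _ _
  have hterm : ∀ i ∈ Finset.range m,
      ‖((f.coeff i : ℂ)) * z ^ i‖ ≤ (|f.coeff i| : ℝ) * α ^ i * (‖z‖ ^ m / α ^ m) := by
    intro i hi
    rw [norm_mul, norm_pow]
    rw [show ‖(f.coeff i : ℂ)‖ = (|f.coeff i| : ℝ) by simp]
    have him : i ≤ m := le_of_lt (Finset.mem_range.mp hi)
    have hpow : (‖z‖/α) ^ i ≤ (‖z‖/α) ^ m := pow_le_pow_right₀ hq him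
    have hzz : ‖z‖ ^ i ≤ α ^ i * (‖z‖ ^ m / α ^ m) := by
      rw [div_pow, div_pow] at hpow
      rw [mul_comm]
      exact (div_le_iff₀ (pow_pos hα i)).mp hpow
    have hca : (0:ℝ) ≤ (|f.coeff i| : ℝ) := by positivity
    nlinarith [pow_nonneg (norm_nonneg z) i]
  have hsum : ∑ i ∈ Finset.range m, ‖((f.coeff i : ℂ)) * z ^ i‖ ≤
      (∑ i ∈ Finset.range m, (|f.coeff i| : ℝ) * α ^ i) * (‖z‖ ^ m / α ^ m) := by
    rw [Finset.sum_mul]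
    exact Finset.sum_le_sum hterm
  have hlarge : (∑ i ∈ Finset.range m, (|f.coeff i| : ℝ) * α ^ i) * (‖z‖ ^ m / α ^ m)
      < (|f.coeff m| : ℝ) * α ^ m * (‖z‖ ^ m / α ^ m) := by
    apply mul_lt_mul_of_pos_right hineq
    positivity
  have heq : (|f.coeff m| : ℝ) * α ^ m * (‖z‖ ^ m / α ^ m) = ‖((f.coeff m : ℂ)) * z ^ m‖ := by
    rw [norm_mul, norm_pow]
    simp only [Complex.norm_intCast, Int.cast_abs]
    field_simp
  rw [heq] at hlarge
  linarith

open Polynomial in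
theorem stmt_11 (m : ℕ) (f : ℤ[X]) (hdeg : f.natDegree = m) (hprim : f.IsPrimitive)
    (α : ℝ) (hα : 0 < α)
    (hineq : (|f.coeff m| : ℝ) * α ^ m >
      ∑ i ∈ Finset.range m, (|f.coeff i| : ℝ) * α ^ i)
    (n d : ℕ) (hn : 0 < n) (hd : 0 < d) (hnα : (n : ℝ) ≥ α + d)
    (hdvd : (d : ℤ) ∣ f.eval (n : ℤ))
    (hprime : Nat.Prime ((f.eval (n : ℤ)).natAbs / d)) :
    Irreducible f := by
  have hinj : Function.Injective (Int.castRingHom ℂ) := fun a b => by simp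
  -- key: any nonconstant divisor g of f satisfies d < |g(n)|
  have hkey : ∀ g : ℤ[X], g ∣ f → 1 ≤ g.natDegree → (d:ℤ) < |g.eval (n:ℤ)| := by
    intro g hgd hgdeg
    have hg0 : g ≠ 0 := fun h => by simp [h] at hgdeg
    set G := g.map (Int.castRingHom ℂ) with hGdef
    have hG : G ≠ 0 := by
      simpa [hGdef, Polynomial.map_eq_zero_iff (f := Int.castRingHom ℂ) hinj] using hg0
    have hs : G.Splits := IsAlgClosed.splits G
    have hcard : Multiset.card G.roots = g.natDegree := by
      rw [← Polynomial.natDegree_map_eq_of_injective hinj g]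
      exact Polynomial.splits_iff_card_roots.mp hs
    have hrootsmall : ∀ z ∈ G.roots, (d:ℝ) < ‖(n:ℂ) - z‖ := by
      intro z hz
      have hzr : G.eval z = 0 := Polynomial.isRoot_of_mem_roots hz
      have hFz : (f.map (Int.castRingHom ℂ)).eval z = 0 := by
        obtain ⟨q, hq⟩ := hgd
        rw [hq, Polynomial.map_mul, Polynomial.eval_mul, hzr, zero_mul]
      have hzα : ‖z‖ < α := by
        by_contra h
        push_neg at h
        exact aux_root_bound m f hdeg α hα hineq z h hFz
      have h1 : ‖(n:ℂ)‖ - ‖z‖ ≤ ‖(n:ℂ) - z‖ := norm_sub_norm_le _ _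
      have h2 : ‖(n:ℂ)‖ = (n:ℝ) := by simp
      rw [h2] at h1
      linarith
    have hGn : ‖G.eval (n:ℂ)‖ =
        ‖G.leadingCoeff‖ * ((G.roots.map fun a => ‖(n:ℂ) - a‖).prod) := by
      rw [hs.eval_eq_prod_roots, norm_mul]
      congr 1
      have := map_multiset_prod (normHom : ℂ →*₀ ℝ) (G.roots.map ((n:ℂ) - ·))
      simpa [Multiset.map_map] using this
    have hlead1 : 1 ≤ ‖G.leadingCoeff‖ := by
      have hGl : G.leadingCoeff = (g.leadingCoeff : ℂ) := by
        rw [hGdef, Polynomial.leadingCoeff, Polynomial.natDegree_map_eq_of_injective hinj g,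
          Polynomial.coeff_map]
        rfl
      rw [hGl, Complex.norm_intCast]
      have : 1 ≤ |g.leadingCoeff| := Int.one_le_abs (Polynomial.leadingCoeff_ne_zero.mpr hg0)
      calc (1:ℝ) = ((1:ℤ):ℝ) := by norm_num
        _ ≤ ((|g.leadingCoeff| : ℤ) : ℝ) := by exact_mod_cast this
        _ = |((g.leadingCoeff : ℤ) : ℝ)| := by push_cast; ring
    have hprodgt : (d:ℝ) < (G.roots.map fun a => ‖(n:ℂ) - a‖).prod := by
      apply aux_multiset_prod_gt (by exact_mod_cast hd)
      · intro h
        have := congrArg Multiset.card h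
        rw [Multiset.card_map, hcard] at this
        simp at this
        omega
      · intro x hx
        obtain ⟨a, ha, rfl⟩ := Multiset.mem_map.mp hx
        exact hrootsmall a ha
    have hfinal : (d:ℝ) < ‖G.eval (n:ℂ)‖ := by
      rw [hGn]
      have hp0 : (0:ℝ) < (G.roots.map fun a => ‖(n:ℂ) - a‖).prod :=
        lt_of_le_of_lt (by exact_mod_cast Nat.zero_le d) hprodgt
      nlinarith
    have hGeval : G.eval (n:ℂ) = ((g.eval (n:ℤ) : ℤ) : ℂ) := by
      rw [hGdef, Polynomial.eval_map, show ((n:ℕ):ℂ) = (Int.castRingHom ℂ) (n:ℤ) by simp,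
        Polynomial.eval₂_at_apply]
      simp
    rw [hGeval, Complex.norm_intCast] at hfinal
    exact_mod_cast hfinal
  -- arithmetic facts
  have hdn : d ∣ (f.eval (n:ℤ)).natAbs := by
    have := Int.natAbs_dvd_natAbs.mpr hdvd
    simpa using this
  have habs : (f.eval (n:ℤ)).natAbs = d * ((f.eval (n:ℤ)).natAbs / d) :=
    (Nat.mul_div_cancel' hdn).symm
  constructor
  · intro hu
    have h0 := hu.map (Polynomial.evalRingHom (n:ℤ))
    simp only [Polynomial.coe_evalRingHom] at h0
    have h1 : (f.eval (n:ℤ)).natAbs = 1 := by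
      rcases Int.isUnit_iff.mp h0 with h | h <;> rw [h] <;> rfl
    have h4 : d * ((f.eval (n:ℤ)).natAbs / d) = 1 := by rw [← habs]; exact h1
    have h2 : (f.eval (n:ℤ)).natAbs / d ∣ 1 := ⟨d, by rw [← h4]; ring⟩
    have h3 := Nat.dvd_one.mp h2
    have := hprime.two_le
    omega
  · intro g h hfgh
    by_contra hcon
    push_neg at hcon
    obtain ⟨hg, hh⟩ := hcon
    have hdegpos : ∀ q : ℤ[X], q ∣ f → ¬IsUnit q → 1 ≤ q.natDegree := by
      intro q hq hqu
      by_contra hcd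
      push_neg at hcd
      have hq0 : q.natDegree = 0 := by omega
      have hqc : q = C (q.coeff 0) := Polynomial.eq_C_of_natDegree_eq_zero hq0
      have : IsUnit (q.coeff 0) := hprim (q.coeff 0) (hqc ▸ hq)
      exact hqu (hqc ▸ Polynomial.isUnit_C.mpr this)
    have hgdvd : g ∣ f := ⟨h, hfgh⟩
    have hhdvd : h ∣ f := ⟨g, by rw [hfgh]; ring⟩
    have hA := hkey g hgdvd (hdegpos g hgdvd hg)
    have hB := hkey h hhdvd (hdegpos h hhdvd hh)
    set A := (g.eval (n:ℤ)).natAbs with hAdef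
    set B := (h.eval (n:ℤ)).natAbs with hBdef
    have hA' : d < A := by
      have : ((d:ℤ)) < ((A:ℤ)) := by rw [hAdef]; rwa [Int.abs_eq_natAbs] at hA
      exact_mod_cast this
    have hB' : d < B := by
      have : ((d:ℤ)) < ((B:ℤ)) := by rw [hBdef]; rwa [Int.abs_eq_natAbs] at hB
      exact_mod_cast this
    set p := (f.eval (n:ℤ)).natAbs / d with hpdef
    have hAB : A * B = d * p := by
      rw [hAdef, hBdef, ← Int.natAbs_mul, ← Polynomial.eval_mul, ← hfgh]
      exact habs
    have hpdvd : p ∣ A * B := ⟨d, by rw [hAB]; ring⟩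
    rcases (Nat.Prime.dvd_mul hprime).mp hpdvd with hpA | hpB
    · obtain ⟨k, hk⟩ := hpA
      have hk0 : 0 < k := by
        rcases Nat.eq_zero_or_pos k with rfl | h
        · omega
        · exact h
      have hkB : k * B = d := by
        have h3 : p * (k * B) = p * d := by
          calc p * (k * B) = (p * k) * B := by ring
            _ = A * B := by rw [hk]
            _ = d * p := hAB
            _ = p * d := by ring
        exact Nat.eq_of_mul_eq_mul_left hprime.pos h3
      have : B ≤ d := Nat.le_of_dvd hd ⟨k, by rw [← hkB]; ring⟩
      omega
    · obtain ⟨k, hk⟩ := hpB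
      have hk0 : 0 < k := by
        rcases Nat.eq_zero_or_pos k with rfl | h
        · omega
        · exact h
      have hkA : k * A = d := by
        have h3 : p * (k * A) = p * d := by
          calc p * (k * A) = A * (p * k) := by ring
            _ = A * B := by rw [hk]
            _ = d * p := hAB
            _ = p * d := by ring
        exact Nat.eq_of_mul_eq_mul_left hprime.pos h3
      have : A ≤ d := Nat.le_of_dvd hd ⟨k, by rw [← hkA]; ring⟩
      omega
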